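/- For every integer m ≥ 1 and every real number a, the average over all type-B permutation tableaux T of size m of a^{U_m(T)} equals a(a+1)(a+2)⋯(a+m-1)/m!, i.e., (1/|B_m|)·Σ_{T ∈ B_m} a^{U_m(T)} = (∏_{i=0}^{m-1} (a+i))/m! (for a > 0 this equals Γ(a+m)/(m!·Γ(a))). -/

import Mathlib

/-- A type-B permutation tableau of size `n`, encoded via its border steps and filling.

Border steps are indexed by `Fin n` (index `i` is the `(i+1)`-th step from the
northeast corner); `west i = true` means the `(i+1)`-th step is a west step
(giving a column) and `west i = false` means it is a south step (giving a row
of the original, unshifted diagram).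

Rows of the shifted diagram are also indexed by `Fin n`: a south step `r` indexes
the corresponding original row, and a west step `r` indexes the inserted diagonal
row whose diagonal cell lies in the column of `r`.  The cell in row `r` and the
column of a west step `c` exists iff (`r` is south and `r < c`) or (`r` is west
and `r ≤ c`); in particular the diagonal cell of the column of `c` is `(c, c)`.
Columns are ordered left-to-right by decreasing step index, rows top-to-bottom as:
diagonal rows by decreasing step index, then original rows by increasing step index.

`filling r c = true` means the cell `(r, c)` contains a 1; `filling` is `false`
outside the cells of the diagram (field `support`).  The fields `col_one`,
`no_bad_zero` and `diag_zero` are the three defining conditions of a type-B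
permutation tableau. -/
structure TypeBTableau (n : ℕ) where
  west : Fin n → Bool
  filling : Fin n → Fin n → Bool
  support : ∀ r c : Fin n, filling r c = true →
    west c = true ∧ ((west r = false ∧ (r : ℕ) < (c : ℕ)) ∨ (west r = true ∧ (r : ℕ) ≤ (c : ℕ)))
  col_one : ∀ c : Fin n, west c = true → ∃ r : Fin n, filling r c = true
  no_bad_zero : ∀ r c : Fin n,
    (west c = true ∧ ((west r = false ∧ (r : ℕ) < (c : ℕ)) ∨ (west r = true ∧ (r : ℕ) ≤ (c : ℕ)))) →
    filling r c = false →
    ¬((∃ r' : Fin n,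
        ((west r' = true ∧ west r = false) ∨
         (west r' = true ∧ west r = true ∧ (r : ℕ) < (r' : ℕ)) ∨
         (west r' = false ∧ west r = false ∧ (r' : ℕ) < (r : ℕ))) ∧
        filling r' c = true) ∧
      (∃ c' : Fin n, (c : ℕ) < (c' : ℕ) ∧ filling r c' = true))
  diag_zero : ∀ j : Fin n, west j = true → filling j j = false →
    ∀ c : Fin n, filling j c = false

namespace TypeBTableau

noncomputable instance instFintype {n : ℕ} : Fintype (TypeBTableau n) :=
  Fintype.ofInjective (fun T => (T.west, T.filling)) (by
    rintro ⟨w1, f1, _, _, _, _⟩ ⟨w2, f2, _, _, _, _⟩ h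
    simp only [Prod.mk.injEq] at h
    obtain ⟨h1, h2⟩ := h
    subst h1; subst h2; rfl)

end TypeBTableau

namespace TypeBTableau

/-- `T.IsCell r c` : the shifted Ferrers diagram of `T` has a cell in row `r` and
in the column of the west step `c`. -/
def IsCell {n : ℕ} (T : TypeBTableau n) (r c : Fin n) : Prop :=
  T.west c = true ∧
    ((T.west r = false ∧ (r : ℕ) < (c : ℕ)) ∨ (T.west r = true ∧ (r : ℕ) ≤ (c : ℕ)))

/-- `T.Above r' r` : row `r'` lies strictly above row `r` in the shifted diagram
(diagonal rows come first, ordered by decreasing step index, followed by the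
original rows ordered by increasing step index). -/
def Above {n : ℕ} (T : TypeBTableau n) (r' r : Fin n) : Prop :=
  (T.west r' = true ∧ T.west r = false) ∨
  (T.west r' = true ∧ T.west r = true ∧ (r : ℕ) < (r' : ℕ)) ∨
  (T.west r' = false ∧ T.west r = false ∧ (r' : ℕ) < (r : ℕ))

/-- The cell `(r, c)` is a restricted 0: it contains a 0 and either has a 1 above
it in its column, or is a diagonal cell. -/
def RestrictedZero {n : ℕ} (T : TypeBTableau n) (r c : Fin n) : Prop :=
  T.IsCell r c ∧ T.filling r c = false ∧
    ((∃ r' : Fin n, T.Above r' r ∧ T.IsCell r' c ∧ T.filling r' c = true) ∨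
      (T.west r = true ∧ r = c))

/-- Row `r` of the shifted diagram is unrestricted: it contains no restricted 0. -/
def Unrestricted {n : ℕ} (T : TypeBTableau n) (r : Fin n) : Prop :=
  ∀ c : Fin n, ¬ T.RestrictedZero r c

instance {n : ℕ} (T : TypeBTableau n) (r c : Fin n) : Decidable (T.RestrictedZero r c) := by
  unfold RestrictedZero IsCell Above; infer_instance

instance {n : ℕ} (T : TypeBTableau n) (r : Fin n) : Decidable (T.Unrestricted r) := by
  unfold Unrestricted; infer_instance

/-- `U_n(T)`, the number of unrestricted rows of `T`. -/
def numUnrestricted {n : ℕ} (T : TypeBTableau n) : ℕ :=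
  (Finset.univ.filter (fun r : Fin n => T.Unrestricted r)).card

end TypeBTableau

open Finset

namespace TypeBTableau

variable {n : ℕ}

lemma ext' {T1 T2 : TypeBTableau n} (hw : T1.west = T2.west)
    (hf : T1.filling = T2.filling) : T1 = T2 := by
  cases T1; cases T2; simp_all

/-- The west steps of the extension of `T` by one last step. -/
def extWest (T : TypeBTableau n) (w : Bool) : Fin (n+1) → Bool :=
  Fin.lastCases w T.west

/-- The filling of the extension of `T` by one last step, the new column (if any)
being filled according to `v`. -/
def extFill (T : TypeBTableau n) (v : Fin (n+1) → Bool) :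
    Fin (n+1) → Fin (n+1) → Bool :=
  fun r c =>
    Fin.lastCases (v r) (fun c0 => Fin.lastCases false (fun r0 => T.filling r0 c0) r) c

@[simp] lemma extWest_last (T : TypeBTableau n) (w : Bool) :
    extWest T w (Fin.last n) = w := by simp [extWest]

@[simp] lemma extWest_castSucc (T : TypeBTableau n) (w : Bool) (i : Fin n) :
    extWest T w i.castSucc = T.west i := by simp [extWest]

@[simp] lemma extFill_last (T : TypeBTableau n) (v : Fin (n+1) → Bool) (r : Fin (n+1)) :
    extFill T v r (Fin.last n) = v r := by simp [extFill]

@[simp] lemma extFill_cast_cast (T : TypeBTableau n) (v : Fin (n+1) → Bool) (r c : Fin n) :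
    extFill T v r.castSucc c.castSucc = T.filling r c := by simp [extFill]

@[simp] lemma extFill_last_cast (T : TypeBTableau n) (v : Fin (n+1) → Bool) (c : Fin n) :
    extFill T v (Fin.last n) c.castSucc = false := by simp [extFill]

/-- Validity of extension data `(w, v)` for `T`. -/
def ExtValid (T : TypeBTableau n) (w : Bool) (v : Fin (n+1) → Bool) : Prop :=
  (∀ r, v r = true → w = true) ∧
  (∀ r : Fin n, v r.castSucc = true → T.Unrestricted r) ∧
  (w = true → ∃ r, v r = true)


/-- The extension of `T` by a last step from valid data. -/
def mkExt (T : TypeBTableau n) (w : Bool) (v : Fin (n+1) → Bool)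
    (h : ExtValid T w v) : TypeBTableau (n+1) where
  west := extWest T w
  filling := extFill T v
  support := by
    intro r c hf
    rcases Fin.eq_castSucc_or_eq_last c with ⟨c0, rfl⟩ | rfl
    · rcases Fin.eq_castSucc_or_eq_last r with ⟨r0, rfl⟩ | rfl
      · simp only [extFill_cast_cast] at hf
        obtain ⟨h1, h2⟩ := T.support r0 c0 hf
        simpa using ⟨h1, h2⟩
      · simp at hf
    · simp only [extFill_last] at hf
      refine ⟨by simpa using h.1 r hf, ?_⟩
      rcases Fin.eq_castSucc_or_eq_last r with ⟨r0, rfl⟩ | rfl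
      · simp only [extWest_castSucc, Fin.coe_castSucc, Fin.val_last]
        cases hw : T.west r0
        · exact Or.inl ⟨rfl, r0.isLt⟩
        · exact Or.inr ⟨rfl, le_of_lt r0.isLt⟩
      · exact Or.inr ⟨by simpa using h.1 _ hf, le_refl _⟩
  col_one := by
    intro c hc
    rcases Fin.eq_castSucc_or_eq_last c with ⟨c0, rfl⟩ | rfl
    · obtain ⟨r, hr⟩ := T.col_one c0 (by simpa using hc)
      exact ⟨r.castSucc, by simpa using hr⟩
    · obtain ⟨r, hr⟩ := h.2.2 (by simpa using hc)
      exact ⟨r, by simpa using hr⟩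
  no_bad_zero := by
    rintro r c hcell hf ⟨⟨r', habove, hr'⟩, ⟨c', hcc', hc'⟩⟩
    rcases Fin.eq_castSucc_or_eq_last c with ⟨c0, rfl⟩ | rfl
    swap
    · have := c'.is_le
      simp only [Fin.val_last] at hcc'
      omega
    rcases Fin.eq_castSucc_or_eq_last r with ⟨r0, rfl⟩ | rfl
    swap
    · have := c0.isLt
      simp only [extWest_last, extWest_castSucc, Fin.val_last, Fin.coe_castSucc] at hcell
      rcases hcell.2 with ⟨_, h2⟩ | ⟨_, h2⟩ <;> omega
    simp only [extFill_cast_cast] at hf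
    rcases Fin.eq_castSucc_or_eq_last r' with ⟨r1, rfl⟩ | rfl
    swap
    · simp at hr'
    simp only [extFill_cast_cast] at hr'
    have habove' : (T.west r1 = true ∧ T.west r0 = false) ∨
        (T.west r1 = true ∧ T.west r0 = true ∧ (r0 : ℕ) < (r1 : ℕ)) ∨
        (T.west r1 = false ∧ T.west r0 = false ∧ (r1 : ℕ) < (r0 : ℕ)) := by
      simpa using habove
    have hcell' : T.west c0 = true ∧ ((T.west r0 = false ∧ (r0 : ℕ) < (c0 : ℕ)) ∨
        (T.west r0 = true ∧ (r0 : ℕ) ≤ (c0 : ℕ))) := by simpa using hcell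
    rcases Fin.eq_castSucc_or_eq_last c' with ⟨c1, rfl⟩ | rfl
    · exact T.no_bad_zero r0 c0 hcell' hf
        ⟨⟨r1, habove', hr'⟩, ⟨c1, by simpa using hcc', by simpa using hc'⟩⟩
    · -- 1 in the new column in row r0 : r0 must be unrestricted, contradiction
      have hunr : T.Unrestricted r0 := h.2.1 r0 (by simpa using hc')
      exact hunr c0 ⟨hcell', hf,
        Or.inl ⟨r1, habove', T.support r1 c0 hr', hr'⟩⟩
  diag_zero := by
    intro j hj hjj c
    rcases Fin.eq_castSucc_or_eq_last j with ⟨j0, rfl⟩ | rfl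
    swap
    · rcases Fin.eq_castSucc_or_eq_last c with ⟨c0, rfl⟩ | rfl
      · simp
      · simpa using hjj
    · have hj' : T.west j0 = true := by simpa using hj
      have hjj' : T.filling j0 j0 = false := by simpa using hjj
      rcases Fin.eq_castSucc_or_eq_last c with ⟨c0, rfl⟩ | rfl
      · simpa using T.diag_zero j0 hj' hjj' c0
      · simp only [extFill_last]
        by_contra hv
        have hv' : v j0.castSucc = true := by
          cases hvv : v j0.castSucc
          · exact absurd hvv hv
          · rfl
        exact h.2.1 j0 hv' j0
          ⟨⟨hj', Or.inr ⟨hj', le_refl _⟩⟩, hjj', Or.inr ⟨hj', rfl⟩⟩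


/-- Restriction of a tableau of size `n+1` to its first `n` steps. -/
def res (T' : TypeBTableau (n+1)) : TypeBTableau n where
  west := fun i => T'.west i.castSucc
  filling := fun r c => T'.filling r.castSucc c.castSucc
  support := by
    intro r c hf
    obtain ⟨h1, h2⟩ := T'.support _ _ hf
    simpa using ⟨h1, h2⟩
  col_one := by
    intro c hc
    obtain ⟨r, hr⟩ := T'.col_one c.castSucc hc
    rcases Fin.eq_castSucc_or_eq_last r with ⟨r0, rfl⟩ | rfl
    · exact ⟨r0, hr⟩
    · obtain ⟨_, h2⟩ := T'.support _ _ hr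
      have := c.isLt
      simp only [Fin.val_last, Fin.coe_castSucc] at h2
      rcases h2 with ⟨_, h2⟩ | ⟨_, h2⟩ <;> omega
  no_bad_zero := by
    rintro r c hcell hf ⟨⟨r', habove, hr'⟩, ⟨c', hcc', hc'⟩⟩
    refine T'.no_bad_zero r.castSucc c.castSucc (by simpa using hcell) hf
      ⟨⟨r'.castSucc, by simpa using habove, hr'⟩,
       ⟨c'.castSucc, by simpa using hcc', hc'⟩⟩
  diag_zero := by
    intro j hj hjj c
    exact T'.diag_zero j.castSucc hj hjj c.castSucc

lemma filling_last_cast (T' : TypeBTableau (n+1)) (c : Fin n) :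
    T'.filling (Fin.last n) c.castSucc = false := by
  cases hf : T'.filling (Fin.last n) c.castSucc
  · rfl
  · obtain ⟨_, h2⟩ := T'.support _ _ hf
    have := c.isLt
    simp only [Fin.val_last, Fin.coe_castSucc] at h2
    rcases h2 with ⟨_, h2⟩ | ⟨_, h2⟩ <;> omega

lemma extValid_res (T' : TypeBTableau (n+1)) :
    ExtValid (res T') (T'.west (Fin.last n)) (fun r => T'.filling r (Fin.last n)) := by
  refine ⟨fun r hr => (T'.support r (Fin.last n) hr).1, ?_, ?_⟩
  · intro r hr c hrc
    obtain ⟨hcell, hf, hwit⟩ := hrc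
    rcases hwit with ⟨r', habove, hcell', hfill'⟩ | ⟨hw, rfl⟩
    · refine T'.no_bad_zero r.castSucc c.castSucc (by exact hcell) hf
        ⟨⟨r'.castSucc, by exact habove, hfill'⟩,
         ⟨Fin.last n, by simpa using c.isLt, hr⟩⟩
    · have := T'.diag_zero r.castSucc hw hf (Fin.last n)
      have hr' : T'.filling r.castSucc (Fin.last n) = true := hr
      rw [this] at hr'
      exact Bool.noConfusion hr'
  · intro hw
    obtain ⟨r, hr⟩ := T'.col_one (Fin.last n) hw
    exact ⟨r, hr⟩

lemma res_mkExt (T : TypeBTableau n) (w : Bool) (v : Fin (n+1) → Bool)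
    (h : ExtValid T w v) : res (mkExt T w v h) = T := by
  refine ext' ?_ ?_
  · funext i; simp [res, mkExt]
  · funext r c; simp [res, mkExt]

lemma mkExt_res (T' : TypeBTableau (n+1)) :
    mkExt (res T') (T'.west (Fin.last n)) (fun r => T'.filling r (Fin.last n))
      (extValid_res T') = T' := by
  refine ext' ?_ ?_
  · funext i
    rcases Fin.eq_castSucc_or_eq_last i with ⟨i0, rfl⟩ | rfl
    · simp [mkExt, res]
    · simp [mkExt]
  · funext r c
    rcases Fin.eq_castSucc_or_eq_last c with ⟨c0, rfl⟩ | rfl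
    · rcases Fin.eq_castSucc_or_eq_last r with ⟨r0, rfl⟩ | rfl
      · simp [mkExt, res]
      · simp [mkExt, filling_last_cast]
    · simp [mkExt]

/-- Tableaux of size `n+1` are equivalent to tableaux of size `n` with valid
extension data. -/
noncomputable def extEquiv :
    TypeBTableau (n+1) ≃
      Σ T : TypeBTableau n, {p : Bool × (Fin (n+1) → Bool) // ExtValid T p.1 p.2} where
  toFun T' := ⟨res T', ⟨(T'.west (Fin.last n), fun r => T'.filling r (Fin.last n)),
    extValid_res T'⟩⟩
  invFun x := mkExt x.1 x.2.1.1 x.2.1.2 x.2.2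
  left_inv T' := mkExt_res T'
  right_inv := by
    rintro ⟨T, ⟨⟨w, v⟩, h⟩⟩
    have h1 : res (mkExt T w v h) = T := res_mkExt T w v h
    refine Sigma.ext h1 ((Subtype.heq_iff_coe_eq ?_).2 ?_)
    · intro x; dsimp only; rw [h1]
    · simp only [Prod.mk.injEq]
      exact ⟨by simp [mkExt], funext fun r => by simp [mkExt]⟩


variable {T : TypeBTableau n} {w : Bool} {v : Fin (n+1) → Bool}

@[simp] lemma mkExt_west (h : ExtValid T w v) : (mkExt T w v h).west = extWest T w := rfl
@[simp] lemma mkExt_filling (h : ExtValid T w v) :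
    (mkExt T w v h).filling = extFill T v := rfl

lemma isCell_cc (h : ExtValid T w v) (r c : Fin n) :
    (mkExt T w v h).IsCell r.castSucc c.castSucc ↔ T.IsCell r c := by
  simp [IsCell]

lemma above_cc (h : ExtValid T w v) (r' r : Fin n) :
    (mkExt T w v h).Above r'.castSucc r.castSucc ↔ T.Above r' r := by
  simp [Above]

lemma isCell_cast_last (h : ExtValid T w v) (r : Fin n) :
    (mkExt T w v h).IsCell r.castSucc (Fin.last n) ↔ w = true := by
  constructor
  · intro hc; simpa using hc.1
  · intro hw
    refine ⟨by simpa using hw, ?_⟩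
    have := r.isLt
    cases hwr : T.west r
    · exact Or.inl ⟨by simpa using hwr, by simpa using this⟩
    · exact Or.inr ⟨by simpa using hwr, by simpa using this.le⟩

lemma isCell_last_last (h : ExtValid T w v) :
    (mkExt T w v h).IsCell (Fin.last n) (Fin.last n) ↔ w = true := by
  constructor
  · intro hc; simpa using hc.1
  · intro hw
    exact ⟨by simpa using hw, Or.inr ⟨by simpa using hw, le_refl _⟩⟩

lemma not_isCell_last_cast (h : ExtValid T w v) (c : Fin n) :
    ¬ (mkExt T w v h).IsCell (Fin.last n) c.castSucc := by
  rintro ⟨_, hcell⟩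
  have := c.isLt
  rcases hcell with ⟨_, h2⟩ | ⟨_, h2⟩ <;> simp at h2 <;> omega

lemma above_last_cast (h : ExtValid T w v) (hw : w = true) (r : Fin n) :
    (mkExt T w v h).Above (Fin.last n) r.castSucc := by
  cases hwr : T.west r
  · exact Or.inl ⟨by simpa using hw, by simpa using hwr⟩
  · exact Or.inr (Or.inl ⟨by simpa using hw, by simpa using hwr,
      by simpa using r.isLt⟩)

lemma restrictedZero_cc (h : ExtValid T w v) (r c : Fin n) :
    (mkExt T w v h).RestrictedZero r.castSucc c.castSucc ↔ T.RestrictedZero r c := by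
  constructor
  · rintro ⟨hcell, hfill, hwit⟩
    refine ⟨(isCell_cc h r c).1 hcell, by simpa using hfill, ?_⟩
    rcases hwit with ⟨r', habove, hcell', hfill'⟩ | ⟨hw, heq⟩
    · rcases Fin.eq_castSucc_or_eq_last r' with ⟨r1, rfl⟩ | rfl
      · exact Or.inl ⟨r1, (above_cc h r1 r).1 habove, (isCell_cc h r1 c).1 hcell',
          by simpa using hfill'⟩
      · simp at hfill'
    · refine Or.inr ⟨by simpa using hw, ?_⟩
      have : (r : ℕ) = (c : ℕ) := by
        have := congrArg (fun x : Fin (n+1) => (x : ℕ)) heq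
        simpa using this
      exact Fin.ext this
  · rintro ⟨hcell, hfill, hwit⟩
    refine ⟨(isCell_cc h r c).2 hcell, by simpa using hfill, ?_⟩
    rcases hwit with ⟨r', habove, hcell', hfill'⟩ | ⟨hw, rfl⟩
    · exact Or.inl ⟨r'.castSucc, (above_cc h r' r).2 habove, (isCell_cc h r' c).2 hcell',
        by simpa using hfill'⟩
    · exact Or.inr ⟨by simpa using hw, rfl⟩

lemma not_unres_cast (h : ExtValid T w v) (r : Fin n) (hr : ¬ T.Unrestricted r) :
    ¬ (mkExt T w v h).Unrestricted r.castSucc := by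
  intro hu
  apply hr
  intro c hc
  exact hu c.castSucc ((restrictedZero_cc h r c).2 hc)

lemma unres_last_false (h : ExtValid T false v) :
    (mkExt T false v h).Unrestricted (Fin.last n) := by
  intro c hc
  obtain ⟨hcell, _, _⟩ := hc
  rcases Fin.eq_castSucc_or_eq_last c with ⟨c0, rfl⟩ | rfl
  · exact not_isCell_last_cast h c0 hcell
  · simpa using hcell.1

lemma unres_cast_false (h : ExtValid T false v) (r : Fin n) :
    (mkExt T false v h).Unrestricted r.castSucc ↔ T.Unrestricted r := by
  constructor
  · intro hu c hc
    exact hu c.castSucc ((restrictedZero_cc h r c).2 hc)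
  · intro hu c hc
    rcases Fin.eq_castSucc_or_eq_last c with ⟨c0, rfl⟩ | rfl
    · exact hu c0 ((restrictedZero_cc h r c0).1 hc)
    · simpa using hc.1.1

lemma unres_last_true (h : ExtValid T true v) :
    (mkExt T true v h).Unrestricted (Fin.last n) ↔ v (Fin.last n) = true := by
  constructor
  · intro hu
    by_contra hv
    have hv' : v (Fin.last n) = false := by
      cases hvv : v (Fin.last n)
      · rfl
      · exact absurd hvv hv
    exact hu (Fin.last n) ⟨(isCell_last_last h).2 rfl, by simpa using hv',
      Or.inr ⟨by simp, rfl⟩⟩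
  · intro hv c hc
    obtain ⟨hcell, hfill, _⟩ := hc
    rcases Fin.eq_castSucc_or_eq_last c with ⟨c0, rfl⟩ | rfl
    · exact not_isCell_last_cast h c0 hcell
    · rw [show (mkExt T true v h).filling (Fin.last n) (Fin.last n) = v (Fin.last n) from by
        simp] at hfill
      rw [hv] at hfill
      exact Bool.noConfusion hfill

instance (T : TypeBTableau n) (r' r : Fin n) : Decidable (T.Above r' r) := by
  unfold Above; infer_instance

/-- The predicate describing which rows of `T` remain unrestricted after a west
extension with filling `v`. -/
def NewUnres (T : TypeBTableau n) (v : Fin (n+1) → Bool) (r : Fin n) : Prop :=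
  T.Unrestricted r ∧ (v r.castSucc = true ∨
    (v (Fin.last n) = false ∧
      ∀ r' : Fin n, T.Unrestricted r' → T.Above r' r → v r'.castSucc = false))

instance (T : TypeBTableau n) (v : Fin (n+1) → Bool) (r : Fin n) :
    Decidable (NewUnres T v r) := by unfold NewUnres; infer_instance

lemma unres_cast_true (h : ExtValid T true v) (r : Fin n) (hT : T.Unrestricted r) :
    (mkExt T true v h).Unrestricted r.castSucc ↔
      (v r.castSucc = true ∨
        (v (Fin.last n) = false ∧
          ∀ r' : Fin n, T.Unrestricted r' → T.Above r' r → v r'.castSucc = false)) := by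
  constructor
  · intro hu
    by_cases hvr : v r.castSucc = true
    · exact Or.inl hvr
    have hvr' : v r.castSucc = false := by
      cases hvv : v r.castSucc
      · rfl
      · exact absurd hvv hvr
    right
    by_cases hvl : v (Fin.last n) = true
    · exfalso
      exact hu (Fin.last n) ⟨(isCell_cast_last h r).2 rfl, by simpa using hvr',
        Or.inl ⟨Fin.last n, above_last_cast h rfl r, (isCell_last_last h).2 rfl,
          by simpa using hvl⟩⟩
    have hvl' : v (Fin.last n) = false := by
      cases hvv : v (Fin.last n)
      · rfl
      · exact absurd hvv hvl
    refine ⟨hvl', ?_⟩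
    intro r' hur' hab
    by_contra hvr2
    have hvr2' : v r'.castSucc = true := by
      cases hvv : v r'.castSucc
      · rw [hvv] at hvr2; exact absurd rfl hvr2
      · rfl
    exact hu (Fin.last n) ⟨(isCell_cast_last h r).2 rfl, by simpa using hvr',
      Or.inl ⟨r'.castSucc, (above_cc h r' r).2 hab, (isCell_cast_last h r').2 rfl,
        by simpa using hvr2'⟩⟩
  · intro hrhs c hc
    rcases Fin.eq_castSucc_or_eq_last c with ⟨c0, rfl⟩ | rfl
    · exact hT c0 ((restrictedZero_cc h r c0).1 hc)
    · obtain ⟨hcell, hfill, hwit⟩ := hc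
      rcases hrhs with hv1 | ⟨hlast, hall⟩
      · rw [show (mkExt T true v h).filling r.castSucc (Fin.last n) = v r.castSucc from by
          simp, hv1] at hfill
        exact Bool.noConfusion hfill
      · rcases hwit with ⟨r', habove, hcell', hfill'⟩ | ⟨_, heq⟩
        · rcases Fin.eq_castSucc_or_eq_last r' with ⟨r1, rfl⟩ | rfl
          · have hv1 : v r1.castSucc = true := by simpa using hfill'
            exact absurd (hall r1 (h.2.1 r1 hv1) ((above_cc h r1 r).1 habove))
              (by simp [hv1])
          · have : v (Fin.last n) = true := by simpa using hfill'
            rw [this] at hlast; exact Bool.noConfusion hlast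
        · have := congrArg (fun x : Fin (n+1) => (x : ℕ)) heq
          have hlt := r.isLt
          simp at this; omega


lemma unres_cast_true' (h : ExtValid T true v) (r : Fin n) :
    (mkExt T true v h).Unrestricted r.castSucc ↔ NewUnres T v r := by
  by_cases hT : T.Unrestricted r
  · rw [unres_cast_true h r hT]
    simp [NewUnres, hT]
  · constructor
    · intro hu; exact absurd hu (not_unres_cast h r hT)
    · intro hu; exact absurd hu.1 hT

lemma numUnres_false (h : ExtValid T false v) :
    (mkExt T false v h).numUnrestricted = T.numUnrestricted + 1 := by
  unfold numUnrestricted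
  rw [Finset.card_filter, Finset.card_filter, Fin.sum_univ_castSucc]
  congr 1
  · refine Finset.sum_congr rfl fun r _ => ?_
    rw [if_congr (unres_cast_false h r) rfl rfl]
  · rw [if_pos (unres_last_false h)]

lemma numUnres_true (h : ExtValid T true v) :
    (mkExt T true v h).numUnrestricted =
      (Finset.univ.filter (NewUnres T v)).card +
        (if v (Fin.last n) = true then 1 else 0) := by
  unfold numUnrestricted
  rw [Finset.card_filter, Finset.card_filter, Fin.sum_univ_castSucc]
  congr 1
  · refine Finset.sum_congr rfl fun r _ => ?_
    rw [if_congr (unres_cast_true' h r) rfl rfl]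
  · rw [if_congr (unres_last_true h) rfl rfl]


lemma aux_sum_powerset_pow {α : Type*} [DecidableEq α] (x : ℝ) (R : Finset α) :
    ∑ S ∈ R.powerset, x ^ S.card = (x + 1) ^ R.card := by
  induction R using Finset.induction_on with
  | empty => simp
  | @insert m R hm ih =>
    rw [Finset.sum_powerset_insert hm, Finset.card_insert_of_notMem hm]
    have h2 : ∑ S ∈ R.powerset, x ^ (insert m S).card =
        ∑ S ∈ R.powerset, x * x ^ S.card := by
      refine Finset.sum_congr rfl fun S hS => ?_
      have hmS : m ∉ S := fun hc => hm (Finset.mem_powerset.1 hS hc)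
      rw [Finset.card_insert_of_notMem hmS, pow_succ]
      ring
    rw [h2, ← Finset.mul_sum, ih, pow_succ]
    ring

lemma aux_topweight (a : ℝ) {α : Type*} [DecidableEq α] (key : α → ℕ) :
    ∀ (u : ℕ) (R : Finset α), R.card = u →
      (∀ r ∈ R, ∀ r' ∈ R, key r = key r' → r = r') →
    ∑ S ∈ R.powerset,
        a ^ (R.filter (fun r => r ∈ S ∨ ∀ r' ∈ S, key r ≤ key r')).card =
      a ^ R.card + a * ((1 + a) ^ R.card - a ^ R.card) := by
  intro u
  induction u with
  | zero =>
    intro R hR _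
    rw [Finset.card_eq_zero] at hR
    subst hR
    simp
  | succ u ih =>
    intro R hR hinj
    have hne : R.Nonempty := by
      rw [← Finset.card_pos, hR]; omega
    obtain ⟨m, hmR, hmin⟩ := Finset.exists_min_image R key hne
    set R' := R.erase m with hR'
    have hmR' : m ∉ R' := Finset.notMem_erase m R
    have hins : insert m R' = R := Finset.insert_erase hmR
    have hcard' : R'.card = u := by
      have h1 : R'.card = R.card - 1 := by
        rw [hR']; exact Finset.card_erase_of_mem hmR
      omega
    have hsub : R' ⊆ R := Finset.erase_subset m R
    have hinj' : ∀ r ∈ R', ∀ r' ∈ R', key r = key r' → r = r' :=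
      fun r hr r' hr' => hinj r (hsub hr) r' (hsub hr')
    have hstrict : ∀ r ∈ R', key m < key r := by
      intro r hr
      rcases lt_or_eq_of_le (hmin r (hsub hr)) with h | h
      · exact h
      · exact absurd (hinj m hmR r (hsub hr) h) (fun he => hmR' (he ▸ hr))
    rw [← hins, Finset.sum_powerset_insert hmR']
    have hterm1 : ∀ S ∈ R'.powerset,
        a ^ ((insert m R').filter
            (fun r => r ∈ S ∨ ∀ r' ∈ S, key r ≤ key r')).card =
        a * a ^ (R'.filter (fun r => r ∈ S ∨ ∀ r' ∈ S, key r ≤ key r')).card := by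
      intro S hS
      have hSsub : S ⊆ R' := Finset.mem_powerset.1 hS
      have hpm : m ∈ S ∨ ∀ r' ∈ S, key m ≤ key r' :=
        Or.inr fun r' hr' => hmin r' (hsub (hSsub hr'))
      rw [Finset.filter_insert, if_pos hpm,
        Finset.card_insert_of_notMem
          (fun hc => hmR' (Finset.mem_of_mem_filter m hc)), pow_succ]
      ring
    rw [Finset.sum_congr rfl hterm1, ← Finset.mul_sum, ih R' hcard' hinj']
    have hterm2 : ∀ S ∈ R'.powerset,
        a ^ ((insert m R').filter
            (fun r => r ∈ insert m S ∨ ∀ r' ∈ insert m S, key r ≤ key r')).card =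
        a * a ^ S.card := by
      intro S hS
      have hSsub : S ⊆ R' := Finset.mem_powerset.1 hS
      have hpm : m ∈ insert m S ∨ ∀ r' ∈ insert m S, key m ≤ key r' :=
        Or.inl (Finset.mem_insert_self m S)
      rw [Finset.filter_insert, if_pos hpm]
      have hfe : R'.filter
          (fun r => r ∈ insert m S ∨ ∀ r' ∈ insert m S, key r ≤ key r') = S := by
        ext r
        simp only [Finset.mem_filter, Finset.mem_insert]
        constructor
        · rintro ⟨hr, (rfl | hrS) | hall⟩
          · exact absurd hr hmR'
          · exact hrS
          · exact absurd (hall m (Or.inl rfl)) (by simpa using hstrict r hr)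
        · intro hrS
          exact ⟨hSsub hrS, Or.inl (Or.inr hrS)⟩
      rw [hfe, Finset.card_insert_of_notMem (fun hc => hmR' (hSsub hc)), pow_succ]
      ring
    rw [Finset.sum_congr rfl hterm2, ← Finset.mul_sum, aux_sum_powerset_pow a R',
      hins, hR, hcard']
    rw [show (1 : ℝ) + a = a + 1 from by ring]
    ring_nf

lemma aux_btrue (a : ℝ) {α : Type*} [DecidableEq α] (R : Finset α) :
    ∑ S ∈ R.powerset, a ^ S.card * a = a * (1 + a) ^ R.card := by
  rw [← Finset.sum_mul, aux_sum_powerset_pow]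
  ring_nf

lemma aux_bfalse (a : ℝ) {α : Type*} [DecidableEq α] (key : α → ℕ) (R : Finset α)
    (hinj : ∀ r ∈ R, ∀ r' ∈ R, key r = key r' → r = r') :
    ∑ S ∈ R.powerset,
        (if S.Nonempty then
          a ^ (R.filter (fun r => r ∈ S ∨ ∀ r' ∈ S, key r ≤ key r')).card else 0) =
      a * ((1 + a) ^ R.card - a ^ R.card) := by
  have hX : ∀ S ∈ R.powerset,
      (if S.Nonempty then
        a ^ (R.filter (fun r => r ∈ S ∨ ∀ r' ∈ S, key r ≤ key r')).card else 0) =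
      a ^ (R.filter (fun r => r ∈ S ∨ ∀ r' ∈ S, key r ≤ key r')).card -
        (if S = (∅ : Finset α) then a ^ R.card else 0) := by
    intro S _
    by_cases hS : S = ∅
    · subst hS
      have : R.filter (fun r => r ∈ (∅ : Finset α) ∨
          ∀ r' ∈ (∅ : Finset α), key r ≤ key r') = R :=
        Finset.filter_true_of_mem fun r _ =>
          Or.inr fun r' hr' => absurd hr' (Finset.notMem_empty r')
      simp [this]
    · rw [if_pos (Finset.nonempty_of_ne_empty hS), if_neg hS]
      ring
  rw [Finset.sum_congr rfl hX, Finset.sum_sub_distrib,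
    aux_topweight a key R.card R rfl hinj, Finset.sum_ite_eq' R.powerset ∅,
    if_pos (Finset.empty_mem_powerset R)]
  ring

/-- Linearizing key for the top-to-bottom order on rows. -/
def keyT (T : TypeBTableau n) (r : Fin n) : ℕ :=
  if T.west r = true then n - 1 - (r : ℕ) else n + (r : ℕ)

lemma above_iff_key (T : TypeBTableau n) (r' r : Fin n) :
    T.Above r' r ↔ keyT T r' < keyT T r := by
  have h1 := r.isLt
  have h2 := r'.isLt
  unfold Above keyT
  cases hw' : T.west r' <;> cases hw : T.west r <;> simp <;> omega

lemma keyT_inj (T : TypeBTableau n) (r r' : Fin n) (h : keyT T r = keyT T r') :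
    r = r' := by
  have h1 := r.isLt
  have h2 := r'.isLt
  unfold keyT at h
  split_ifs at h <;> (apply Fin.ext) <;> omega

end TypeBTableau

namespace TypeBTableau

variable {n : ℕ}

instance (T : TypeBTableau n) (w : Bool) (v : Fin (n+1) → Bool) :
    Decidable (ExtValid T w v) := by
  unfold ExtValid; infer_instance

end TypeBTableau

/-- Appending a last value to a boolean vector. -/
def mySnocEquiv (n : ℕ) : (Fin n → Bool) × Bool ≃ (Fin (n+1) → Bool) where
  toFun gb := Fin.snoc gb.1 gb.2
  invFun v := (fun r => v r.castSucc, v (Fin.last n))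
  left_inv := by
    rintro ⟨g, b⟩
    simp
  right_inv := by
    intro v
    funext i
    rcases Fin.eq_castSucc_or_eq_last i with ⟨i0, rfl⟩ | rfl
    · simp
    · simp

lemma sum_reindex {n : ℕ} {β : Type*} [AddCommMonoid β] (P : Fin n → Prop)
    [DecidablePred P] (h : (Fin n → Bool) → β) :
    ∑ g : Fin n → Bool, (if (∀ r, g r = true → P r) then h g else 0)
      = ∑ S ∈ (Finset.univ.filter P).powerset, h (fun r => decide (r ∈ S)) := by
  rw [← Finset.sum_filter]
  have hback : ∀ g : Fin n → Bool,
      (fun r => decide (r ∈ Finset.univ.filter (fun r => g r = true))) = g := by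
    intro g
    funext r
    by_cases hr : g r = true
    · simp [hr]
    · simp only [Bool.not_eq_true] at hr
      simp [hr]
  refine Finset.sum_nbij' (i := fun g => Finset.univ.filter (fun r => g r = true))
    (j := fun S => fun r => decide (r ∈ S)) ?_ ?_ ?_ ?_ ?_
  · intro g hg
    simp only [Finset.mem_filter, Finset.mem_univ, true_and] at hg
    simp only [Finset.mem_powerset]
    intro r hr
    simp only [Finset.mem_filter, Finset.mem_univ, true_and] at hr ⊢
    exact hg r hr
  · intro S hS
    simp only [Finset.mem_powerset] at hS
    simp only [Finset.mem_filter, Finset.mem_univ, true_and]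
    intro r hr
    have : r ∈ S := by simpa using hr
    have := hS this
    simpa using this
  · intro g _
    exact hback g
  · intro S _
    ext r
    simp
  · intro g _
    exact congrArg h (hback g).symm

namespace TypeBTableau

variable {n : ℕ}

lemma hstep_true (T : TypeBTableau n) (a : ℝ) (g : Fin n → Bool) :
    (if ExtValid T true (Fin.snoc g true) then
        a ^ (Finset.univ.filter (NewUnres T (Fin.snoc g true))).card *
          (if (Fin.snoc g true : Fin (n+1) → Bool) (Fin.last n) = true then a else 1)
      else 0)
    = (if (∀ r, g r = true → T.Unrestricted r) then
        a ^ (Finset.univ.filter (fun r => T.Unrestricted r ∧ g r = true)).card * a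
       else 0) := by
  have hsnoc : ∀ r : Fin n, (Fin.snoc g true : Fin (n+1) → Bool) r.castSucc = g r :=
    fun r => by simp
  have hlast : (Fin.snoc g true : Fin (n+1) → Bool) (Fin.last n) = true :=
    by simp
  have hvalid : ExtValid T true (Fin.snoc g true) ↔
      (∀ r, g r = true → T.Unrestricted r) := by
    constructor
    · intro h r hr
      exact h.2.1 r (by rw [hsnoc]; exact hr)
    · intro h
      exact ⟨fun _ _ => rfl, fun r hr => h r (by rw [hsnoc] at hr; exact hr),
        fun _ => ⟨Fin.last n, hlast⟩⟩
  have hnew : ∀ r : Fin n, NewUnres T (Fin.snoc g true) r ↔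
      (T.Unrestricted r ∧ g r = true) := by
    intro r
    unfold NewUnres
    rw [hsnoc, hlast]
    simp
  rw [if_congr hvalid rfl rfl, if_pos hlast]
  by_cases hg : ∀ r, g r = true → T.Unrestricted r
  · rw [if_pos hg, if_pos hg]
    have hfe : Finset.univ.filter (NewUnres T (Fin.snoc g true)) =
        Finset.univ.filter (fun r => T.Unrestricted r ∧ g r = true) :=
      Finset.filter_congr fun r _ => by simpa using (hnew r)
    rw [hfe]
  · rw [if_neg hg, if_neg hg]

lemma hstep_false (T : TypeBTableau n) (a : ℝ) (g : Fin n → Bool) :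
    (if ExtValid T true (Fin.snoc g false) then
        a ^ (Finset.univ.filter (NewUnres T (Fin.snoc g false))).card *
          (if (Fin.snoc g false : Fin (n+1) → Bool) (Fin.last n) = true then a else 1)
      else 0)
    = (if (∀ r, g r = true → T.Unrestricted r) then
        (if (∃ r, g r = true) then
          a ^ (Finset.univ.filter (fun r => T.Unrestricted r ∧ (g r = true ∨
            ∀ r' : Fin n, T.Unrestricted r' → T.Above r' r → g r' = false))).card
         else 0)
       else 0) := by
  have hsnoc : ∀ r : Fin n, (Fin.snoc g false : Fin (n+1) → Bool) r.castSucc = g r :=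
    fun r => by simp
  have hlast : (Fin.snoc g false : Fin (n+1) → Bool) (Fin.last n) = false :=
    by simp
  have hvalid : ExtValid T true (Fin.snoc g false) ↔
      ((∀ r, g r = true → T.Unrestricted r) ∧ (∃ r, g r = true)) := by
    constructor
    · intro h
      refine ⟨fun r hr => h.2.1 r (by rw [hsnoc]; exact hr), ?_⟩
      obtain ⟨i, hi⟩ := h.2.2 rfl
      rcases Fin.eq_castSucc_or_eq_last i with ⟨i0, rfl⟩ | rfl
      · exact ⟨i0, by rw [hsnoc] at hi; exact hi⟩
      · rw [hlast] at hi; exact Bool.noConfusion hi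
    · rintro ⟨h1, r, hr⟩
      exact ⟨fun _ _ => rfl, fun r' hr' => h1 r' (by rw [hsnoc] at hr'; exact hr'),
        fun _ => ⟨r.castSucc, by rw [hsnoc]; exact hr⟩⟩
  have hnew : ∀ r : Fin n, NewUnres T (Fin.snoc g false) r ↔
      (T.Unrestricted r ∧ (g r = true ∨
        ∀ r' : Fin n, T.Unrestricted r' → T.Above r' r → g r' = false)) := by
    intro r
    unfold NewUnres
    rw [hlast]
    constructor
    · rintro ⟨h1, h2 | ⟨-, h3⟩⟩
      · exact ⟨h1, Or.inl (by rw [hsnoc] at h2; exact h2)⟩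
      · exact ⟨h1, Or.inr fun r' hr' ha => (by rw [← hsnoc]; exact h3 r' hr' ha)⟩
    · rintro ⟨h1, h2 | h3⟩
      · exact ⟨h1, Or.inl (by rw [hsnoc]; exact h2)⟩
      · exact ⟨h1, Or.inr ⟨rfl, fun r' hr' ha => by rw [hsnoc]; exact h3 r' hr' ha⟩⟩
  rw [if_congr hvalid rfl rfl]
  by_cases h1 : ∀ r, g r = true → T.Unrestricted r
  · by_cases h2 : ∃ r, g r = true
    · rw [if_pos ⟨h1, h2⟩, if_pos h1, if_pos h2]
      rw [if_neg (by simp [hlast] : ¬ (Fin.snoc g false : Fin (n+1) → Bool) (Fin.last n) = true)]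
      rw [mul_one]
      have hfe : Finset.univ.filter (NewUnres T (Fin.snoc g false)) =
          Finset.univ.filter (fun r => T.Unrestricted r ∧ (g r = true ∨
            ∀ r' : Fin n, T.Unrestricted r' → T.Above r' r → g r' = false)) :=
        Finset.filter_congr fun r _ => by simpa using (hnew r)
      rw [hfe]
    · rw [if_neg (fun hc => h2 hc.2), if_pos h1, if_neg h2]
  · rw [if_neg (fun hc => h1 hc.1), if_neg h1]


lemma branch_true_sum (T : TypeBTableau n) (a : ℝ) :
    ∑ S ∈ (Finset.univ.filter (fun r : Fin n => T.Unrestricted r)).powerset,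
        a ^ (Finset.univ.filter (fun r => T.Unrestricted r ∧
          (decide (r ∈ S)) = true)).card * a
      = a * (1 + a) ^ T.numUnrestricted := by
  have hfe : ∀ S ∈ (Finset.univ.filter (fun r : Fin n => T.Unrestricted r)).powerset,
      a ^ (Finset.univ.filter (fun r => T.Unrestricted r ∧
        (decide (r ∈ S)) = true)).card * a = a ^ S.card * a := by
    intro S hS
    rw [Finset.mem_powerset] at hS
    have hset : Finset.univ.filter (fun r => T.Unrestricted r ∧
        (decide (r ∈ S)) = true) = S := by
      ext r
      simp only [Finset.mem_filter, Finset.mem_univ, true_and, decide_eq_true_eq]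
      constructor
      · rintro ⟨_, hr⟩; exact hr
      · intro hr
        have := hS hr
        simp only [Finset.mem_filter, Finset.mem_univ, true_and] at this
        exact ⟨this, hr⟩
    rw [hset]
  rw [Finset.sum_congr rfl hfe, aux_btrue]
  rfl

lemma branch_false_sum (T : TypeBTableau n) (a : ℝ) :
    ∑ S ∈ (Finset.univ.filter (fun r : Fin n => T.Unrestricted r)).powerset,
        (if (∃ r, (decide (r ∈ S)) = true) then
          a ^ (Finset.univ.filter (fun r => T.Unrestricted r ∧
            ((decide (r ∈ S)) = true ∨
              ∀ r' : Fin n, T.Unrestricted r' → T.Above r' r →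
                (decide (r' ∈ S)) = false))).card
         else 0)
      = a * ((1 + a) ^ T.numUnrestricted - a ^ T.numUnrestricted) := by
  set R : Finset (Fin n) := Finset.univ.filter (fun r : Fin n => T.Unrestricted r)
    with hRdef
  have hcong : ∀ S ∈ R.powerset,
      (if (∃ r, (decide (r ∈ S)) = true) then
        a ^ (Finset.univ.filter (fun r => T.Unrestricted r ∧
          ((decide (r ∈ S)) = true ∨
            ∀ r' : Fin n, T.Unrestricted r' → T.Above r' r →
              (decide (r' ∈ S)) = false))).card
       else 0)
      = (if S.Nonempty then
          a ^ (R.filter (fun r => r ∈ S ∨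
            ∀ r' ∈ S, keyT T r ≤ keyT T r')).card else 0) := by
    intro S hS
    rw [Finset.mem_powerset] at hS
    have hmem : ∀ r ∈ S, T.Unrestricted r := by
      intro r hr
      have := hS hr
      simp only [hRdef, Finset.mem_filter, Finset.mem_univ, true_and] at this
      exact this
    refine if_congr (by simp [Finset.Nonempty]) ?_ rfl
    congr 2
    ext r
    simp only [hRdef, Finset.mem_filter, Finset.mem_univ, true_and,
      decide_eq_true_eq, decide_eq_false_iff_not]
    refine and_congr_right fun hur => or_congr_right ?_
    constructor
    · intro h3 r' hr'
      by_contra hk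
      push_neg at hk
      exact h3 r' (hmem r' hr') ((above_iff_key T r' r).2 hk) hr'
    · intro h3 r' _ ha hr'S
      exact absurd ((above_iff_key T r' r).1 ha) (not_lt.2 (h3 r' hr'S))
  rw [Finset.sum_congr rfl hcong]
  have haux := aux_bfalse a (keyT T) R (fun r _ r' _ h => keyT_inj T r r' h)
  convert haux using 2
  refine if_congr Iff.rfl (congrArg (a ^ ·) (congrArg Finset.card ?_)) rfl
  ext r
  simp only [Finset.mem_filter]
  rfl

set_option maxHeartbeats 1000000 in
lemma sum_ext (T : TypeBTableau n) (a : ℝ) :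
    ∑ p : {p : Bool × (Fin (n+1) → Bool) // ExtValid T p.1 p.2},
        a ^ (mkExt T p.1.1 p.1.2 p.2).numUnrestricted
      = 2 * a * (1 + a) ^ T.numUnrestricted := by
  classical
  set u : ℕ := T.numUnrestricted with hu
  set W : Bool × (Fin (n+1) → Bool) → ℝ := fun x =>
    if x.1 = true then
      a ^ (Finset.univ.filter (NewUnres T x.2)).card *
        (if x.2 (Fin.last n) = true then a else 1)
    else a ^ (u + 1) with hWdef
  have hW : ∀ p : {p : Bool × (Fin (n+1) → Bool) // ExtValid T p.1 p.2},
      a ^ (mkExt T p.1.1 p.1.2 p.2).numUnrestricted = W p.1 := by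
    rintro ⟨⟨w, v⟩, h⟩
    cases w
    · show a ^ (mkExt T false v h).numUnrestricted = _
      rw [numUnres_false h]
      simp [hWdef, hu]
    · show a ^ (mkExt T true v h).numUnrestricted = _
      rw [numUnres_true h]
      simp only [hWdef, if_pos rfl]
      by_cases hv : v (Fin.last n) = true
      · rw [if_pos hv, if_pos hv, pow_add, pow_one]
      · rw [if_neg hv, if_neg hv, add_zero, mul_one]
  rw [Finset.sum_congr rfl (fun p _ => hW p)]
  rw [← Finset.sum_subtype (Finset.univ.filter fun x : Bool × (Fin (n+1) → Bool) =>
      ExtValid T x.1 x.2) (by intro x; simp) W]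
  rw [Finset.sum_filter, Fintype.sum_prod_type, Fintype.sum_bool]
  have hfalse : ∑ v : Fin (n+1) → Bool,
      (if ExtValid T false v then W (false, v) else 0) = a ^ (u + 1) := by
    have hiff : ∀ v : Fin (n+1) → Bool,
        ExtValid T false v ↔ v = fun _ => false := by
      intro v
      constructor
      · intro h
        funext r
        cases hv : v r
        · rfl
        · exact Bool.noConfusion (h.1 r hv)
      · rintro rfl
        exact ⟨fun r hr => Bool.noConfusion hr, fun r hr => Bool.noConfusion hr,
          fun hw => Bool.noConfusion hw⟩
    calc ∑ v : Fin (n+1) → Bool, (if ExtValid T false v then W (false, v) else 0)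
        = ∑ v : Fin (n+1) → Bool,
            (if v = (fun _ => false) then W (false, v) else 0) :=
          Finset.sum_congr rfl fun v _ => if_congr (hiff v) rfl rfl
      _ = a ^ (u + 1) := by
          rw [Finset.sum_ite_eq' Finset.univ (fun _ => false)
            (fun v => W (false, v))]
          simp [hWdef]
  have htrue : ∑ v : Fin (n+1) → Bool,
      (if ExtValid T true v then W (true, v) else 0)
      = a * (1 + a) ^ u + a * ((1 + a) ^ u - a ^ u) := by
    rw [← Equiv.sum_comp (mySnocEquiv n)
      (fun v => if ExtValid T true v then W (true, v) else 0),
      Fintype.sum_prod_type]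
    have hline : ∀ g : Fin n → Bool,
        (∑ b : Bool, if ExtValid T true (mySnocEquiv n (g, b)) then
          W (true, mySnocEquiv n (g, b)) else 0)
        = (if (∀ r, g r = true → T.Unrestricted r) then
            a ^ (Finset.univ.filter (fun r => T.Unrestricted r ∧ g r = true)).card * a
           else 0)
          + (if (∀ r, g r = true → T.Unrestricted r) then
              (if (∃ r, g r = true) then
                a ^ (Finset.univ.filter (fun r => T.Unrestricted r ∧ (g r = true ∨
                  ∀ r' : Fin n, T.Unrestricted r' → T.Above r' r →
                    g r' = false))).card
               else 0)
            else 0) := by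
      intro g
      rw [Fintype.sum_bool]
      show (if ExtValid T true (Fin.snoc g true) then W (true, Fin.snoc g true) else 0)
          + (if ExtValid T true (Fin.snoc g false) then
              W (true, Fin.snoc g false) else 0) = _
      rw [show W (true, Fin.snoc g true) =
          a ^ (Finset.univ.filter (NewUnres T (Fin.snoc g true))).card *
            (if (Fin.snoc g true : Fin (n+1) → Bool) (Fin.last n) = true then a else 1)
        from by simp [hWdef]]
      rw [show W (true, Fin.snoc g false) =
          a ^ (Finset.univ.filter (NewUnres T (Fin.snoc g false))).card *
            (if (Fin.snoc g false : Fin (n+1) → Bool) (Fin.last n) = true then a else 1)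
        from by simp [hWdef]]
      rw [hstep_true T a g, hstep_false T a g]
    rw [Finset.sum_congr rfl (fun g _ => hline g), Finset.sum_add_distrib]
    rw [sum_reindex (fun r => T.Unrestricted r)
      (fun g => a ^ (Finset.univ.filter (fun r => T.Unrestricted r ∧
        g r = true)).card * a)]
    rw [sum_reindex (fun r => T.Unrestricted r)
      (fun g => (if (∃ r, g r = true) then
        a ^ (Finset.univ.filter (fun r => T.Unrestricted r ∧ (g r = true ∨
          ∀ r' : Fin n, T.Unrestricted r' → T.Above r' r → g r' = false))).card
       else 0))]
    rw [branch_true_sum T a, branch_false_sum T a]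
  rw [htrue, hfalse]
  rw [pow_succ]
  ring

lemma Zrec (n : ℕ) (a : ℝ) :
    ∑ T' : TypeBTableau (n+1), a ^ T'.numUnrestricted
      = 2 * a * ∑ T : TypeBTableau n, (1 + a) ^ T.numUnrestricted := by
  rw [← Equiv.sum_comp (extEquiv (n := n)).symm
    (fun T' : TypeBTableau (n+1) => a ^ T'.numUnrestricted)]
  rw [← Finset.univ_sigma_univ, Finset.sum_sigma]
  have hT : ∀ T : TypeBTableau n,
      ∑ p : {p : Bool × (Fin (n+1) → Bool) // ExtValid T p.1 p.2},
        a ^ ((extEquiv (n := n)).symm ⟨T, p⟩).numUnrestricted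
      = 2 * a * (1 + a) ^ T.numUnrestricted := by
    intro T
    rw [← sum_ext T a]
    rfl
  rw [Finset.sum_congr rfl fun T _ => hT T, ← Finset.mul_sum]

instance : Unique (TypeBTableau 0) where
  default :=
    ⟨Fin.elim0, fun i => i.elim0, fun r => r.elim0, fun c => c.elim0,
      fun r => r.elim0, fun j => j.elim0⟩
  uniq T := ext' (funext fun i => i.elim0) (funext fun r => r.elim0)

lemma Zval : ∀ (n : ℕ) (a : ℝ),
    ∑ T : TypeBTableau n, a ^ T.numUnrestricted
      = 2 ^ n * ∏ i ∈ Finset.range n, (a + (i : ℝ)) := by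
  intro n
  induction n with
  | zero =>
    intro a
    rw [Fintype.sum_unique]
    have : (default : TypeBTableau 0).numUnrestricted = 0 :=
      Finset.card_eq_zero.2 (by ext r; exact r.elim0)
    rw [this, pow_zero, pow_zero, Finset.range_zero, Finset.prod_empty]
    norm_num
  | succ n ih =>
    intro a
    rw [Zrec n a, ih (1 + a)]
    have h1 : ∏ i ∈ Finset.range n, ((1 + a) + (i : ℝ))
        = ∏ i ∈ Finset.range n, (a + ((i + 1 : ℕ) : ℝ)) := by
      refine Finset.prod_congr rfl fun i _ => ?_
      push_cast
      ring
    rw [h1]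
    rw [show ∏ i ∈ Finset.range (n+1), (a + (i : ℝ))
        = (∏ i ∈ Finset.range n, (a + ((i + 1 : ℕ) : ℝ))) * (a + ((0 : ℕ) : ℝ)) from
      Finset.prod_range_succ' (fun i => (a + (i : ℝ))) n]
    push_cast
    ring

end TypeBTableau

/-- The average of `a ^ U_m(T)` over all type-B permutation tableaux `T` of size
`m` equals `a(a+1)⋯(a+m-1)/m!`. -/
theorem expected_a_pow_unrestricted (m : ℕ) (hm : 1 ≤ m) (a : ℝ) :
    (1 / (Fintype.card (TypeBTableau m) : ℝ)) *
        ∑ T : TypeBTableau m, a ^ T.numUnrestricted =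
      (∏ i ∈ Finset.range m, (a + (i : ℝ))) / (Nat.factorial m : ℝ) := by
  have hcard : (Fintype.card (TypeBTableau m) : ℝ)
      = 2 ^ m * (Nat.factorial m : ℝ) := by
    have h1 : ∑ T : TypeBTableau m, (1 : ℝ) ^ T.numUnrestricted
        = (Fintype.card (TypeBTableau m) : ℝ) := by
      rw [Finset.sum_congr rfl (fun T _ => one_pow _), Finset.sum_const, nsmul_eq_mul,
        mul_one, Finset.card_univ]
    rw [← h1, TypeBTableau.Zval m 1]
    congr 1
    have : ∏ i ∈ Finset.range m, ((1 : ℝ) + (i : ℝ))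
        = ∏ i ∈ Finset.range m, (((i + 1 : ℕ) : ℝ)) := by
      refine Finset.prod_congr rfl fun i _ => ?_
      push_cast
      ring
    rw [this, ← Nat.cast_prod, Finset.prod_range_add_one_eq_factorial]
  rw [TypeBTableau.Zval m a, hcard]
  have h2 : (2 : ℝ) ^ m ≠ 0 := by positivity
  have h3 : (Nat.factorial m : ℝ) ≠ 0 := by
    exact_mod_cast Nat.factorial_ne_zero m
  field_simp
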